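/- arXiv:1902.10578 — 2 statements merged into one kernel-verified Lean document; each statement's English description precedes it below -/
import Mathlib

section
/- Let (X,d,μ) be a metric space endowed with a doubling measure μ, and let S ⊂ X be a porous set. Let 1 ≤ p < ∞. Then there is a constant c, independent of x and r, such that for every x ∈ S and every 0 < r ≤ 1: ∫_{B(x,r)} ( log(1/d(y,S)) )^p dμ(y) ≤ c · μ(B(x,r)) · ( 1 + ( log(1/r) )^p ). (Note that for y ∈ B(x,r) with x ∈ S one has d(y,S) ≤ r ≤ 1, so the integrand is nonnegative.) -/
open MeasureTheory Metric Set ENNReal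

/-- `S` is porous in `X`: for some `κ ∈ (0,1]`, every ball `B(x,r)` with `0 < r ≤ 1`
contains a point `y` with `B(y,κr) ∩ S = ∅`. -/
def IsPorousSet {X : Type*} [MetricSpace X] (S : Set X) : Prop :=
  ∃ κ : ℝ, κ ∈ Set.Ioc (0 : ℝ) 1 ∧ ∀ (x : X) (r : ℝ), 0 < r → r ≤ 1 →
    ∃ y ∈ Metric.ball x r, Metric.ball y (κ * r) ∩ S = ∅

section PorousAux

set_option linter.unusedSectionVars false

lemma add_rpow_le_two_rpow {a b p : ℝ} (ha : 0 ≤ a) (hb : 0 ≤ b) (hp : 0 ≤ p) :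
    (a + b) ^ p ≤ 2 ^ p * (a ^ p + b ^ p) := by
  have hmax : a + b ≤ 2 * max a b := by
    rcases le_total a b with h | h
    · rw [max_eq_right h]; linarith
    · rw [max_eq_left h]; linarith
  have h0m : (0:ℝ) ≤ max a b := le_max_of_le_left ha
  calc (a + b) ^ p ≤ (2 * max a b) ^ p :=
        Real.rpow_le_rpow (by linarith) hmax hp
    _ = 2 ^ p * (max a b) ^ p := Real.mul_rpow (by norm_num) h0m
    _ ≤ 2 ^ p * (a ^ p + b ^ p) := by
        apply mul_le_mul_of_nonneg_left _ (by positivity)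
        rcases le_total a b with h | h
        · rw [max_eq_right h]
          exact le_add_of_nonneg_left (Real.rpow_nonneg ha p)
        · rw [max_eq_left h]
          exact le_add_of_nonneg_right (Real.rpow_nonneg hb p)

lemma summable_aux {q : ℝ} (hq0 : 0 < q) (hq1 : q < 1) (N : ℕ) :
    Summable (fun k : ℕ => ((k : ℝ) + 1) ^ N * q ^ k) := by
  have h1 : Summable (fun k : ℕ => ((k : ℝ)) ^ N * q ^ k) :=
    summable_pow_mul_geometric_of_norm_lt_one N
      (by rw [Real.norm_eq_abs, abs_of_pos hq0]; exact hq1)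
  have h2 : Summable (fun k : ℕ => ((k + 1 : ℕ) : ℝ) ^ N * q ^ (k + 1)) :=
    (summable_nat_add_iff 1).2 h1
  have h3 := h2.mul_left q⁻¹
  refine h3.congr fun k => ?_
  push_cast
  rw [pow_succ]
  field_simp

variable {X : Type*} [MetricSpace X] [MeasurableSpace X] [BorelSpace X]
  (μ : MeasureTheory.Measure X)

lemma dbl_pow {C : ℝ} (hC : 0 ≤ C)
    (hdbl : ∀ (z : X) (s : ℝ), 0 < s → μ (ball z (2 * s)) ≤ ENNReal.ofReal C * μ (ball z s)) :
    ∀ (k : ℕ) (z : X) (s : ℝ), 0 < s →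
      μ (ball z (2 ^ k * s)) ≤ ENNReal.ofReal (C ^ k) * μ (ball z s) := by
  intro k
  induction k with
  | zero => intro z s hs; simp
  | succ k ih =>
    intro z s hs
    have h1 : (2 : ℝ) ^ (k + 1) * s = 2 ^ k * (2 * s) := by ring
    rw [h1]
    calc μ (ball z (2 ^ k * (2 * s))) ≤ ENNReal.ofReal (C ^ k) * μ (ball z (2 * s)) :=
          ih z (2 * s) (by linarith)
      _ ≤ ENNReal.ofReal (C ^ k) * (ENNReal.ofReal C * μ (ball z s)) := by
          gcongr; exact hdbl z s hs
      _ = ENNReal.ofReal (C ^ (k + 1)) * μ (ball z s) := by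
          rw [← mul_assoc, ← ENNReal.ofReal_mul (by positivity), ← pow_succ]

lemma dbl_le {C : ℝ} (hC : 0 ≤ C)
    (hdbl : ∀ (z : X) (s : ℝ), 0 < s → μ (ball z (2 * s)) ≤ ENNReal.ofReal C * μ (ball z s))
    (k : ℕ) (z : X) {s R : ℝ} (hs : 0 < s) (hR : R ≤ 2 ^ k * s) :
    μ (ball z R) ≤ ENNReal.ofReal (C ^ k) * μ (ball z s) :=
  le_trans (measure_mono (ball_subset_ball hR)) (dbl_pow μ hC hdbl k z s hs)

lemma decay_step {C : ℝ} (hC : 1 ≤ C)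
    (hdbl : ∀ (z : X) (s : ℝ), 0 < s → μ (ball z (2 * s)) ≤ ENNReal.ofReal C * μ (ball z s))
    {S : Set X} (hSne : S.Nonempty)
    {κ : ℝ} (hκ0 : 0 < κ) (hκ1 : κ ≤ 1)
    (hpor : ∀ (x : X) (r : ℝ), 0 < r → r ≤ 1 →
      ∃ y ∈ ball x r, ball y (κ * r) ∩ S = ∅)
    {m : ℕ} (hm : 30 / κ ≤ 2 ^ m)
    (x : X) {ρ' ρ t : ℝ} (ht0 : 0 < t) (ht1 : t ≤ 1) (hρ : ρ' + 7 * t ≤ ρ)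
    (hfin : μ (ball x ρ) ≠ ⊤)
    (hpos : ∀ z ∈ ball x (ρ' + t), μ (ball z t) ≠ 0) :
    μ ({y | infDist y S < κ * t / 6} ∩ ball x ρ')
      + ENNReal.ofReal (C ^ m)⁻¹ * μ ({y | infDist y S < t} ∩ ball x ρ')
    ≤ μ ({y | infDist y S < 5 * t} ∩ ball x ρ) := by
  have hC0 : (0:ℝ) ≤ C := by linarith
  set E' : Set X := {y | infDist y S < κ * t / 6} ∩ ball x ρ' with hE'def
  set E : Set X := {y | infDist y S < t} ∩ ball x ρ' with hEdef
  set big : Set X := {y | infDist y S < 5 * t} ∩ ball x ρ with hbigdef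
  set T : Set X := S ∩ ball x (ρ' + t) with hTdef
  obtain ⟨u, huT, hdisj, hcov⟩ :=
    Vitali.exists_disjoint_subfamily_covering_enlargement_closedBall T id (fun _ => t) t
      (fun _ _ => le_rfl) 4 (by norm_num)
  simp only [id] at hdisj hcov
  have hcarve : ∀ z ∈ u, ∃ w : X,
      ball w (κ * t / 6) ⊆ closedBall z t ∧
      (∀ v ∈ ball w (κ * t / 6), κ * t / 6 ≤ infDist v S) ∧
      μ (closedBall z (4 * t)) ≤ ENNReal.ofReal (C ^ m) * μ (ball w (κ * t / 6)) := by
    intro z hz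
    have hzS : z ∈ S := (huT hz).1
    obtain ⟨w, hw1, hw2⟩ := hpor z (t / 3) (by linarith) (by linarith)
    rw [mem_ball] at hw1
    refine ⟨w, ?_, ?_, ?_⟩
    · intro v hv
      rw [mem_ball] at hv
      rw [mem_closedBall]
      have : dist v z ≤ dist v w + dist w z := dist_triangle v w z
      nlinarith
    · intro v hv
      rw [mem_ball] at hv
      by_contra hcon
      push_neg at hcon
      obtain ⟨s, hsS, hs⟩ := (infDist_lt_iff hSne).1 hcon
      have hsw : s ∈ ball w (κ * (t / 3)) := by
        rw [mem_ball]
        have : dist s w ≤ dist s v + dist v w := dist_triangle s v w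
        rw [dist_comm s v] at this
        nlinarith
      exact Set.eq_empty_iff_forall_notMem.1 hw2 s ⟨hsw, hsS⟩
    · have hsub : closedBall z (4 * t) ⊆ ball w (5 * t) := by
        intro v hv
        rw [mem_closedBall] at hv
        rw [mem_ball]
        have h1 : dist v w ≤ dist v z + dist z w := dist_triangle v z w
        rw [dist_comm z w] at h1
        nlinarith
      have h5 : 5 * t ≤ 2 ^ m * (κ * t / 6) := by
        rw [div_le_iff₀ hκ0] at hm
        nlinarith
      calc μ (closedBall z (4 * t)) ≤ μ (ball w (5 * t)) := measure_mono hsub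
        _ ≤ ENNReal.ofReal (C ^ m) * μ (ball w (κ * t / 6)) :=
            dbl_le μ hC0 hdbl m w (by positivity) h5
  choose! w hw using hcarve
  have hball_sub : ∀ z ∈ u, closedBall z t ⊆ ball x ρ := by
    intro z hz v hv
    have hzT : z ∈ T := huT hz
    have hzx : dist z x < ρ' + t := mem_ball.1 hzT.2
    rw [mem_closedBall] at hv
    rw [mem_ball]
    have : dist v x ≤ dist v z + dist z x := dist_triangle v z x
    linarith
  have hucnt : u.Countable := by
    have h1 : Set.Countable {z : ↥u | 0 < μ (closedBall (z : X) t)} := by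
      apply MeasureTheory.Measure.countable_meas_pos_of_disjoint_of_meas_iUnion_ne_top μ
        (fun z : ↥u => measurableSet_closedBall)
        (fun i j hij => hdisj i.2 j.2 (fun h => hij (Subtype.ext h)))
      refine ne_top_of_le_ne_top hfin (measure_mono ?_)
      exact Set.iUnion_subset fun z => hball_sub z z.2
    have h2 : {z : ↥u | 0 < μ (closedBall (z : X) t)} = Set.univ := by
      ext z
      simp only [Set.mem_setOf_eq, Set.mem_univ, iff_true]
      refine lt_of_lt_of_le ?_ (measure_mono ball_subset_closedBall)
      have hzT : (z : X) ∈ T := huT z.2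
      exact (hpos z hzT.2).bot_lt
    rw [h2, Set.countable_univ_iff] at h1
    exact Set.countable_coe_iff.1 h1
  set c : X → Set X := fun z => ball (w z) (κ * t / 6) with hcdef
  set W : Set X := ⋃ z ∈ u, c z with hWdef
  have hWmeas : MeasurableSet W :=
    (isOpen_biUnion fun z _ => isOpen_ball).measurableSet
  have hcdisj : u.PairwiseDisjoint c := by
    intro z hz z' hz' hne
    exact (hdisj hz hz' hne).mono (hw z hz).1 (hw z' hz').1
  have hμW : μ W = ∑' z : ↥u, μ (c z) := measure_biUnion hucnt hcdisj fun z _ => measurableSet_ball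
  have hEcov : E ⊆ ⋃ z ∈ u, closedBall z (4 * t) := by
    intro y hy
    obtain ⟨hy1, hy2⟩ := hy
    obtain ⟨s, hsS, hs⟩ := (infDist_lt_iff hSne).1 hy1
    have hsT : s ∈ T := by
      refine ⟨hsS, ?_⟩
      rw [mem_ball] at hy2 ⊢
      have : dist s x ≤ dist s y + dist y x := dist_triangle s y x
      rw [dist_comm s y] at this
      linarith
    obtain ⟨b, hbu, hb⟩ := hcov s hsT
    have hyb : y ∈ closedBall s t := by
      rw [mem_closedBall]; linarith
    refine Set.mem_biUnion hbu ?_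
    have := hb hyb
    simpa [mul_comm] using this
  have hEle : μ E ≤ ENNReal.ofReal (C ^ m) * μ W := by
    calc μ E ≤ μ (⋃ z ∈ u, closedBall z (4 * t)) := measure_mono hEcov
      _ ≤ ∑' z : ↥u, μ (closedBall (z : X) (4 * t)) := measure_biUnion_le μ hucnt _
      _ ≤ ∑' z : ↥u, ENNReal.ofReal (C ^ m) * μ (c (z : X)) :=
          ENNReal.tsum_le_tsum fun z => (hw z z.2).2.2
      _ = ENNReal.ofReal (C ^ m) * μ W := by rw [ENNReal.tsum_mul_left, hμW]
  have hθE : ENNReal.ofReal (C ^ m)⁻¹ * μ E ≤ μ W := by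
    have hCm : (0:ℝ) < C ^ m := by positivity
    calc ENNReal.ofReal (C ^ m)⁻¹ * μ E
        ≤ ENNReal.ofReal (C ^ m)⁻¹ * (ENNReal.ofReal (C ^ m) * μ W) := by gcongr
      _ = ENNReal.ofReal ((C ^ m)⁻¹ * C ^ m) * μ W := by
          rw [ENNReal.ofReal_mul (by positivity), mul_assoc]
      _ = μ W := by rw [inv_mul_cancel₀ hCm.ne']; simp
  have hWbig : W ⊆ big := by
    intro v hv
    obtain ⟨z, hz, hvz⟩ := Set.mem_iUnion₂.1 hv
    have hvcb : v ∈ closedBall z t := (hw z hz).1 hvz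
    rw [mem_closedBall] at hvcb
    constructor
    · have : infDist v S ≤ dist v z := infDist_le_dist_of_mem (huT hz).1
      simp only [Set.mem_setOf_eq]
      linarith
    · exact hball_sub z hz (by rwa [mem_closedBall])
  have hE'big : E' ⊆ big \ W := by
    intro y hy
    obtain ⟨hy1, hy2⟩ := hy
    simp only [Set.mem_setOf_eq] at hy1
    constructor
    · constructor
      · simp only [Set.mem_setOf_eq]; nlinarith
      · exact ball_subset_ball (by linarith) hy2
    · intro hyW
      obtain ⟨z, hz, hyz⟩ := Set.mem_iUnion₂.1 hyW
      have := (hw z hz).2.1 y hyz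
      linarith
  calc μ E' + ENNReal.ofReal (C ^ m)⁻¹ * μ E
      ≤ μ (big \ W) + μ W := add_le_add (measure_mono hE'big) hθE
    _ = μ ((big \ W) ∪ W) := (measure_union disjoint_sdiff_left hWmeas).symm
    _ = μ big := by rw [Set.diff_union_self, Set.union_eq_self_of_subset_right hWbig]

lemma decay {C : ℝ} (hC : 1 ≤ C)
    (hdbl : ∀ (z : X) (s : ℝ), 0 < s → μ (ball z (2 * s)) ≤ ENNReal.ofReal C * μ (ball z s))
    {S : Set X} (hSne : S.Nonempty)
    {κ : ℝ} (hκ0 : 0 < κ) (hκ1 : κ ≤ 1)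
    (hpor : ∀ (x : X) (r : ℝ), 0 < r → r ≤ 1 →
      ∃ y ∈ ball x r, ball y (κ * r) ∩ S = ∅)
    {m : ℕ} (hm : 30 / κ ≤ 2 ^ m)
    (x : X) {r : ℝ} (hr0 : 0 < r) (hr1 : r ≤ 1)
    (hfin : μ (ball x (4 * r)) ≠ ⊤) (hpos0 : μ (ball x r) ≠ 0) :
    ∀ k : ℕ, μ ({y | infDist y S < r * (κ / 30) ^ k} ∩ ball x (2 * r * (1 + (κ / 30) ^ k)))
      ≤ ((ENNReal.ofReal (1 + (C ^ m)⁻¹))⁻¹) ^ k * μ (ball x (4 * r)) := by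
  have hC0 : (0:ℝ) ≤ C := by linarith
  set lam : ℝ := κ / 30 with hlam
  have hlam0 : 0 < lam := by positivity
  have hlamle : lam ≤ 1 / 30 := by rw [hlam]; linarith
  set θ : ℝ := (C ^ m)⁻¹ with hθ
  have hθ0 : 0 < θ := by positivity
  set A : ℝ≥0∞ := ENNReal.ofReal (1 + θ) with hA
  have hA0 : A ≠ 0 := by
    rw [hA]; simp only [ne_eq, ENNReal.ofReal_eq_zero, not_le]; linarith
  have hAtop : A ≠ ⊤ := ENNReal.ofReal_ne_top
  intro k
  induction k with
  | zero =>
    have hball : (2 : ℝ) * r * (1 + lam ^ 0) = 4 * r := by ring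
    rw [hball, pow_zero]
    simpa using measure_mono (μ := μ)
      (Set.inter_subset_right (s := {y | infDist y S < r * 1}) (t := ball x (4 * r)))
  | succ k ih =>
    have hlamk : (0:ℝ) < lam ^ k := by positivity
    have hlamk1 : lam ^ k ≤ 1 := pow_le_one₀ (le_of_lt hlam0) (by linarith)
    set t : ℝ := r / 5 * lam ^ k with htdef
    have ht0 : 0 < t := by positivity
    have ht1 : t ≤ 1 := by
      have : t ≤ r / 5 := by rw [htdef]; nlinarith
      linarith
    set ρ' : ℝ := 2 * r * (1 + lam ^ (k + 1)) with hρ'def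
    set ρ : ℝ := 2 * r * (1 + lam ^ k) with hρdef
    have hρ'pos : 0 < ρ' := by positivity
    have hρineq : ρ' + 7 * t ≤ ρ := by
      rw [hρ'def, hρdef, htdef, pow_succ]
      nlinarith
    have hρle : ρ ≤ 4 * r := by rw [hρdef]; nlinarith
    have hfinρ : μ (ball x ρ) ≠ ⊤ :=
      ne_top_of_le_ne_top hfin (measure_mono (ball_subset_ball hρle))
    have hposρ : ∀ z ∈ ball x (ρ' + t), μ (ball z t) ≠ 0 := by
      intro z hz hzero
      have hρ't : ρ' + t ≤ 5 * r := by
        rw [hρ'def, htdef]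
        have : lam ^ (k + 1) ≤ 1 := pow_le_one₀ (le_of_lt hlam0) (by linarith)
        nlinarith
      have hsub : ball x r ⊆ ball z (6 * r) := by
        intro v hv
        rw [mem_ball] at hv hz ⊢
        have h1 : dist v z ≤ dist v x + dist x z := dist_triangle v x z
        rw [dist_comm x z] at h1
        linarith
      obtain ⟨j, hj⟩ := pow_unbounded_of_one_lt ((6 * r) / t) (one_lt_two (α := ℝ))
      have h6 : 6 * r ≤ 2 ^ j * t := by
        rw [div_lt_iff₀ ht0] at hj
        linarith
      have := calc μ (ball x r) ≤ μ (ball z (2 ^ j * t)) :=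
            measure_mono (hsub.trans (ball_subset_ball h6))
        _ ≤ ENNReal.ofReal (C ^ j) * μ (ball z t) := dbl_pow μ hC0 hdbl j z t ht0
        _ = 0 := by rw [hzero, mul_zero]
      exact hpos0 (le_antisymm this zero_le)
    have hstep := decay_step μ hC hdbl hSne hκ0 hκ1 hpor hm x ht0 ht1 hρineq hfinρ hposρ
    have heq1 : κ * t / 6 = r * lam ^ (k + 1) := by
      rw [htdef, hlam, pow_succ]; ring
    have heq2 : 5 * t = r * lam ^ k := by rw [htdef]; ring
    rw [heq1, heq2] at hstep
    set Tk1 : Set X := {y | infDist y S < r * lam ^ (k + 1)} ∩ ball x ρ' with hTk1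
    have hsubE : Tk1 ⊆ {y | infDist y S < t} ∩ ball x ρ' := by
      apply Set.inter_subset_inter_left
      intro y hy
      simp only [Set.mem_setOf_eq] at hy ⊢
      have : r * lam ^ (k + 1) ≤ t := by
        rw [htdef, pow_succ]
        nlinarith
      linarith
    have hkey : A * μ Tk1 ≤ (A⁻¹) ^ k * μ (ball x (4 * r)) := by
      have h1 : A * μ Tk1 = μ Tk1 + ENNReal.ofReal θ * μ Tk1 := by
        rw [hA, ENNReal.ofReal_add (by norm_num) (le_of_lt hθ0), ENNReal.ofReal_one, add_mul]
        rw [one_mul]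
      rw [h1]
      calc μ Tk1 + ENNReal.ofReal θ * μ Tk1
          ≤ μ Tk1 + ENNReal.ofReal θ * μ ({y | infDist y S < t} ∩ ball x ρ') :=
            add_le_add le_rfl (mul_le_mul_right (measure_mono hsubE) _)
        _ ≤ μ ({y | infDist y S < r * lam ^ k} ∩ ball x ρ) := hstep
        _ ≤ (A⁻¹) ^ k * μ (ball x (4 * r)) := ih
    calc μ Tk1 = (A⁻¹ * A) * μ Tk1 := by rw [ENNReal.inv_mul_cancel hA0 hAtop, one_mul]
      _ = A⁻¹ * (A * μ Tk1) := by rw [mul_assoc]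
      _ ≤ A⁻¹ * ((A⁻¹) ^ k * μ (ball x (4 * r))) := by gcongr
      _ = (A⁻¹) ^ (k + 1) * μ (ball x (4 * r)) := by rw [pow_succ', mul_assoc]

end PorousAux

set_option maxHeartbeats 1000000 in
/-- Logarithmic integral estimate around porous sets in doubling metric measure spaces:
for `x ∈ S` and `0 < r ≤ 1`,
`∫_{B(x,r)} log^p (1/d(y,S)) dμ(y) ≤ c μ(B(x,r)) (1 + log^p (1/r))`. -/
theorem log_integral_porous_set
    {X : Type*} [MetricSpace X] [MeasurableSpace X] [BorelSpace X]
    (μ : MeasureTheory.Measure X)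
    (C_d : ℝ) (hCd : 0 < C_d)
    (hdbl : ∀ (x : X) (r : ℝ), 0 < r →
      μ (Metric.ball x (2 * r)) ≤ ENNReal.ofReal C_d * μ (Metric.ball x r))
    (S : Set X) (hS : IsPorousSet S)
    (p : ℝ) (hp : 1 ≤ p) :
    ∃ c > (0 : ℝ), ∀ x ∈ S, ∀ r : ℝ, 0 < r → r ≤ 1 →
      (∫⁻ y in Metric.ball x r,
          ENNReal.ofReal (Real.log (1 / Metric.infDist y S) ^ p) ∂μ)
        ≤ ENNReal.ofReal c * μ (Metric.ball x r) *
            ENNReal.ofReal (1 + Real.log (1 / r) ^ p) := by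
  obtain ⟨κ, ⟨hκ0, hκ1⟩, hpor⟩ := hS
  set C : ℝ := max C_d 1 with hCdef
  have hC1 : 1 ≤ C := le_max_right _ _
  have hC0 : (0:ℝ) ≤ C := by linarith
  have hdbl' : ∀ (z : X) (s : ℝ), 0 < s →
      μ (ball z (2 * s)) ≤ ENNReal.ofReal C * μ (ball z s) := fun z s hs =>
    (hdbl z s hs).trans (mul_le_mul_left (ENNReal.ofReal_le_ofReal (le_max_left _ _)) _)
  obtain ⟨m, hm'⟩ := pow_unbounded_of_one_lt (30 / κ) (one_lt_two (α := ℝ))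
  have hm : 30 / κ ≤ 2 ^ m := le_of_lt hm'
  set θ : ℝ := (C ^ m)⁻¹ with hθdef
  have hθ0 : 0 < θ := by positivity
  set q : ℝ := (1 + θ)⁻¹ with hqdef
  have hq0 : 0 < q := by positivity
  have hq1 : q < 1 := by
    rw [hqdef]
    rw [inv_lt_one_iff₀]
    right; linarith
  have hq1' : 0 < 1 - q := by linarith
  set lam : ℝ := κ / 30 with hlamdef
  have hlam0 : 0 < lam := by positivity
  have hlam1 : lam < 1 := by rw [hlamdef]; linarith
  set L : ℝ := Real.log (30 / κ) with hLdef
  have hL0 : 0 < L := Real.log_pos (by rw [lt_div_iff₀ hκ0]; linarith)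
  have hLlam : L = -Real.log lam := by
    rw [hLdef, hlamdef, ← Real.log_inv, inv_div]
  set N : ℕ := ⌈p⌉₊ with hNdef
  have hpN : p ≤ (N : ℝ) := Nat.le_ceil p
  have hp0 : (0:ℝ) ≤ p := by linarith
  have h2p : (0:ℝ) < 2 ^ p := Real.rpow_pos_of_pos two_pos p
  have hSigsum : Summable (fun k : ℕ => ((k : ℝ) + 1) ^ N * q ^ k) := summable_aux hq0 hq1 N
  set Sig0 : ℝ := ∑' k : ℕ, ((k : ℝ) + 1) ^ N * q ^ k with hSig0def
  have hSig00 : 0 ≤ Sig0 := tsum_nonneg fun k => by positivity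
  set c0 : ℝ := max (2 ^ p * (1 - q)⁻¹) (2 ^ p * L ^ p * Sig0) with hc0def
  have hc00 : 0 < c0 := lt_of_lt_of_le (by positivity) (le_max_left _ _)
  refine ⟨C ^ 2 * c0, by positivity, ?_⟩
  intro x hx r hr0 hr1
  have hSne : S.Nonempty := ⟨x, hx⟩
  set R : ℝ := Real.log (1 / r) with hRdef
  have hR0 : 0 ≤ R := Real.log_nonneg (by rw [le_div_iff₀ hr0]; linarith)
  have hRp0 : 0 ≤ R ^ p := Real.rpow_nonneg hR0 p
  by_cases h0 : μ (ball x r) = 0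
  · rw [setLIntegral_measure_zero _ _ h0]; exact zero_le
  by_cases htop : μ (ball x r) = ⊤
  · rw [htop]
    have h1 : ENNReal.ofReal (C ^ 2 * c0) ≠ 0 := by
      simp only [ne_eq, ENNReal.ofReal_eq_zero, not_le]
      positivity
    have h2 : ENNReal.ofReal (1 + R ^ p) ≠ 0 := by
      simp only [ne_eq, ENNReal.ofReal_eq_zero, not_le]
      linarith
    rw [ENNReal.mul_top h1, ENNReal.top_mul h2]
    exact le_top
  -- main case
  have hfin4 : μ (ball x (4 * r)) ≠ ⊤ := by
    have h4 : (4:ℝ) * r ≤ 2 ^ 2 * r := by norm_num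
    refine ne_top_of_le_ne_top ?_ (dbl_le μ hC0 hdbl' 2 x hr0 h4)
    exact ENNReal.mul_ne_top ENNReal.ofReal_ne_top htop
  have hdec0 := decay μ hC1 hdbl' hSne hκ0 hκ1 hpor hm x hr0 hr1 hfin4 h0
  have hQ : (ENNReal.ofReal (1 + (C ^ m)⁻¹))⁻¹ = ENNReal.ofReal q := by
    rw [hqdef, ENNReal.ofReal_inv_of_pos (by linarith)]
  have hdec : ∀ k : ℕ, μ ({y | infDist y S < r * lam ^ k} ∩ ball x r)
      ≤ ENNReal.ofReal (q ^ k) * (ENNReal.ofReal (C ^ 2) * μ (ball x r)) := by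
    intro k
    have hlamk : (0:ℝ) < lam ^ k := by positivity
    calc μ ({y | infDist y S < r * lam ^ k} ∩ ball x r)
        ≤ μ ({y | infDist y S < r * lam ^ k} ∩ ball x (2 * r * (1 + lam ^ k))) := by
          apply measure_mono
          apply Set.inter_subset_inter_right
          apply ball_subset_ball
          nlinarith
      _ ≤ ((ENNReal.ofReal (1 + (C ^ m)⁻¹))⁻¹) ^ k * μ (ball x (4 * r)) := hdec0 k
      _ ≤ ENNReal.ofReal (q ^ k) * (ENNReal.ofReal (C ^ 2) * μ (ball x r)) := by
          rw [hQ, ← ENNReal.ofReal_pow (le_of_lt hq0)]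
          exact mul_le_mul_right (dbl_le μ hC0 hdbl' 2 x hr0 (by norm_num)) _
  set f : X → ℝ≥0∞ := fun y => ENNReal.ofReal (Real.log (1 / infDist y S) ^ p) with hfdef
  set Z : Set X := {y | infDist y S ≤ 0} with hZdef
  set Ak : ℕ → Set X := fun k =>
    ball x r ∩ {y | r * lam ^ (k + 1) ≤ infDist y S ∧ infDist y S < r * lam ^ k} with hAkdef
  have hcover : ball x r ⊆ Z ∪ ⋃ k, Ak k := by
    intro y hy
    rcases le_or_gt (infDist y S) 0 with h | h
    · exact Or.inl h
    · refine Or.inr ?_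
      have hdr : infDist y S < r * lam ^ 0 := by
        rw [pow_zero, mul_one]
        exact lt_of_le_of_lt (infDist_le_dist_of_mem hx) (mem_ball.1 hy)
      have hex : ∃ j : ℕ, r * lam ^ j ≤ infDist y S := by
        obtain ⟨n, hn⟩ := exists_pow_lt_of_lt_one (div_pos h hr0) hlam1
        refine ⟨n, le_of_lt ?_⟩
        rw [lt_div_iff₀ hr0] at hn
        linarith [hn]
      have hj₀ : r * lam ^ (Nat.find hex) ≤ infDist y S := Nat.find_spec hex
      have hj₀0 : Nat.find hex ≠ 0 := by
        intro hh
        rw [hh, pow_zero, mul_one] at hj₀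
        rw [pow_zero, mul_one] at hdr
        linarith
      obtain ⟨k, hk⟩ := Nat.exists_eq_succ_of_ne_zero hj₀0
      refine Set.mem_iUnion.2 ⟨k, hy, ?_, ?_⟩
      · rw [← Nat.succ_eq_add_one, ← hk]; exact hj₀
      · have hmin := Nat.find_min hex (by omega : k < Nat.find hex)
        push_neg at hmin
        exact hmin
  have hZmeas : MeasurableSet Z :=
    (isClosed_le (continuous_infDist_pt S) continuous_const).measurableSet
  have hZint : ∫⁻ y in Z, f y ∂μ = 0 := by
    have : ∀ y ∈ Z, f y = 0 := by
      intro y hy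
      have h1 : infDist y S = 0 := le_antisymm hy infDist_nonneg
      have h2 : (1:ℝ) / infDist y S = 0 := by rw [h1]; norm_num
      rw [hfdef]
      simp only [h2, Real.log_zero]
      rw [Real.zero_rpow (by positivity : (0:ℝ) < p).ne']
      simp
    rw [setLIntegral_congr_fun hZmeas this]
    simp
  have hmulL : ∀ k : ℕ, Real.log (1 / (r * lam ^ (k + 1))) = R + ((k:ℝ) + 1) * L := by
    intro k
    rw [one_div, Real.log_inv, Real.log_mul hr0.ne' (by positivity : lam ^ (k+1) ≠ 0),
      Real.log_pow, hRdef, one_div, Real.log_inv, hLlam]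
    push_cast
    ring
  have hAkmeas : ∀ k, MeasurableSet (Ak k) := by
    intro k
    apply measurableSet_ball.inter
    have h1 : MeasurableSet {y : X | r * lam ^ (k + 1) ≤ infDist y S} :=
      measurableSet_le measurable_const (continuous_infDist_pt S).measurable
    have h2 : MeasurableSet {y : X | infDist y S < r * lam ^ k} :=
      measurableSet_lt (continuous_infDist_pt S).measurable measurable_const
    have heq : {y : X | r * lam ^ (k + 1) ≤ infDist y S ∧ infDist y S < r * lam ^ k}
        = {y : X | r * lam ^ (k + 1) ≤ infDist y S} ∩ {y : X | infDist y S < r * lam ^ k} := rfl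
    rw [heq]
    exact h1.inter h2
  have hAkbound : ∀ k, ∀ y ∈ Ak k, f y ≤ ENNReal.ofReal ((R + ((k:ℝ) + 1) * L) ^ p) := by
    intro k y hy
    obtain ⟨hyb, hd1, hd2⟩ := hy
    have hlamk : (0:ℝ) < lam ^ k := by positivity
    have hlamk1 : lam ^ k ≤ 1 := pow_le_one₀ (le_of_lt hlam0) (le_of_lt hlam1)
    have hd0 : 0 < infDist y S := lt_of_lt_of_le (by positivity) hd1
    have hdle1 : infDist y S ≤ 1 := by nlinarith
    have hlog0 : 0 ≤ Real.log (1 / infDist y S) :=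
      Real.log_nonneg (by rw [le_div_iff₀ hd0]; linarith)
    have hloge : Real.log (1 / infDist y S) ≤ R + ((k:ℝ) + 1) * L := by
      rw [← hmulL k]
      apply Real.log_le_log (by positivity)
      apply one_div_le_one_div_of_le (by positivity) hd1
    rw [hfdef]
    exact ENNReal.ofReal_le_ofReal (Real.rpow_le_rpow hlog0 hloge hp0)
  have hAkint : ∀ k, ∫⁻ y in Ak k, f y ∂μ
      ≤ ENNReal.ofReal ((R + ((k:ℝ) + 1) * L) ^ p) * μ (Ak k) := by
    intro k
    calc ∫⁻ y in Ak k, f y ∂μ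
        ≤ ∫⁻ _ in Ak k, ENNReal.ofReal ((R + ((k:ℝ) + 1) * L) ^ p) ∂μ :=
          setLIntegral_mono' (hAkmeas k) (hAkbound k)
      _ = ENNReal.ofReal ((R + ((k:ℝ) + 1) * L) ^ p) * μ (Ak k) := setLIntegral_const _ _
  set b : ℕ → ℝ := fun k => (R + ((k:ℝ) + 1) * L) ^ p * q ^ k with hbdef
  have hbnn : ∀ k, 0 ≤ b k := by
    intro k
    apply mul_nonneg (Real.rpow_nonneg (by positivity) p) (by positivity)
  set g : ℕ → ℝ := fun k => 2 ^ p * R ^ p * q ^ k + 2 ^ p * L ^ p * (((k:ℝ) + 1) ^ N * q ^ k)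
    with hgdef
  have hble : ∀ k, b k ≤ g k := by
    intro k
    have h1 : (R + ((k:ℝ) + 1) * L) ^ p ≤ 2 ^ p * (R ^ p + (((k:ℝ) + 1) * L) ^ p) :=
      add_rpow_le_two_rpow hR0 (by positivity) hp0
    have h2 : (((k:ℝ) + 1) * L) ^ p = ((k:ℝ) + 1) ^ p * L ^ p :=
      Real.mul_rpow (by positivity) (le_of_lt hL0)
    have h3 : ((k:ℝ) + 1) ^ p ≤ ((k:ℝ) + 1) ^ N := by
      rw [← Real.rpow_natCast ((k:ℝ) + 1) N]
      exact Real.rpow_le_rpow_of_exponent_le (by linarith [Nat.cast_nonneg (α := ℝ) k]) hpN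
    have hLp : (0:ℝ) ≤ L ^ p := Real.rpow_nonneg (le_of_lt hL0) p
    have hqk : (0:ℝ) ≤ q ^ k := by positivity
    have h4 : (R + ((k:ℝ) + 1) * L) ^ p ≤ 2 ^ p * R ^ p + 2 ^ p * L ^ p * ((k:ℝ) + 1) ^ N := by
      rw [h2] at h1
      have h5 : ((k:ℝ) + 1) ^ p * L ^ p ≤ ((k:ℝ) + 1) ^ N * L ^ p :=
        mul_le_mul_of_nonneg_right h3 hLp
      have h6 : 2 ^ p * (R ^ p + ((k:ℝ) + 1) ^ p * L ^ p)
          ≤ 2 ^ p * (R ^ p + ((k:ℝ) + 1) ^ N * L ^ p) := by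
        apply mul_le_mul_of_nonneg_left _ h2p.le
        linarith
      have h7 : 2 ^ p * (R ^ p + ((k:ℝ) + 1) ^ N * L ^ p)
          = 2 ^ p * R ^ p + 2 ^ p * L ^ p * ((k:ℝ) + 1) ^ N := by ring
      linarith
    calc b k ≤ (2 ^ p * R ^ p + 2 ^ p * L ^ p * ((k:ℝ) + 1) ^ N) * q ^ k :=
          mul_le_mul_of_nonneg_right h4 hqk
      _ = g k := by rw [hgdef]; ring
  have hgsum : Summable g := by
    apply Summable.add
    · exact (summable_geometric_of_lt_one (le_of_lt hq0) hq1).mul_left _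
    · exact hSigsum.mul_left _
  have hbsum : Summable b := Summable.of_nonneg_of_le hbnn hble hgsum
  have htsum_b : ∑' k, b k ≤ c0 * (1 + R ^ p) := by
    have h1 : ∑' k, b k ≤ ∑' k, g k := Summable.tsum_le_tsum hble hbsum hgsum
    have h2 : ∑' k, g k = 2 ^ p * R ^ p * (1 - q)⁻¹ + 2 ^ p * L ^ p * Sig0 := by
      rw [hgdef, Summable.tsum_add ((summable_geometric_of_lt_one (le_of_lt hq0) hq1).mul_left _)
        (hSigsum.mul_left _), tsum_mul_left, tsum_mul_left,
        tsum_geometric_of_lt_one (le_of_lt hq0) hq1, hSig0def]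
    have h3 : 2 ^ p * R ^ p * (1 - q)⁻¹ ≤ c0 * R ^ p := by
      have : 2 ^ p * (1 - q)⁻¹ ≤ c0 := le_max_left _ _
      nlinarith
    have h4 : 2 ^ p * L ^ p * Sig0 ≤ c0 := le_max_right _ _
    nlinarith
  calc ∫⁻ y in ball x r, f y ∂μ
      ≤ ∫⁻ y in Z ∪ ⋃ k, Ak k, f y ∂μ := lintegral_mono_set hcover
    _ ≤ (∫⁻ y in Z, f y ∂μ) + ∫⁻ y in ⋃ k, Ak k, f y ∂μ := lintegral_union_le _ _ _
    _ = ∫⁻ y in ⋃ k, Ak k, f y ∂μ := by rw [hZint, zero_add]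
    _ ≤ ∑' k, ∫⁻ y in Ak k, f y ∂μ := lintegral_iUnion_le _ _
    _ ≤ ∑' k, ENNReal.ofReal (b k) * (ENNReal.ofReal (C ^ 2) * μ (ball x r)) := by
        apply ENNReal.tsum_le_tsum
        intro k
        calc ∫⁻ y in Ak k, f y ∂μ
            ≤ ENNReal.ofReal ((R + ((k:ℝ) + 1) * L) ^ p) * μ (Ak k) := hAkint k
          _ ≤ ENNReal.ofReal ((R + ((k:ℝ) + 1) * L) ^ p) *
              (ENNReal.ofReal (q ^ k) * (ENNReal.ofReal (C ^ 2) * μ (ball x r))) := by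
              apply mul_le_mul_right
              refine le_trans (measure_mono ?_) (hdec k)
              intro y hy
              exact ⟨hy.2.2, hy.1⟩
          _ = ENNReal.ofReal (b k) * (ENNReal.ofReal (C ^ 2) * μ (ball x r)) := by
              rw [hbdef, ← mul_assoc,
                ← ENNReal.ofReal_mul (Real.rpow_nonneg (by positivity) p)]
    _ = (∑' k, ENNReal.ofReal (b k)) * (ENNReal.ofReal (C ^ 2) * μ (ball x r)) :=
        ENNReal.tsum_mul_right
    _ ≤ ENNReal.ofReal (c0 * (1 + R ^ p)) * (ENNReal.ofReal (C ^ 2) * μ (ball x r)) := by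
        apply mul_le_mul_left
        rw [← ENNReal.ofReal_tsum_of_nonneg hbnn hbsum]
        exact ENNReal.ofReal_le_ofReal htsum_b
    _ = ENNReal.ofReal (C ^ 2 * c0) * μ (ball x r) * ENNReal.ofReal (1 + R ^ p) := by
        rw [ENNReal.ofReal_mul (le_of_lt hc00), ENNReal.ofReal_mul (by positivity : (0:ℝ) ≤ C ^ 2)]
        ring
end

section
/- Let (X,d) be a complete metric space and let Ω ⊂ X be a bounded John domain. Then the boundary ∂Ω is a porous set in X: there exists κ ∈ (0,1] such that for every x ∈ X and every 0 < r ≤ 1 there is y ∈ B(x,r) with B(y,κr) ∩ ∂Ω = ∅. -/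
open Metric Set

/-- `Ω` is a John domain: a bounded open connected set with a central point `x₀` and
constant `c_J > 0` such that every `x ∈ Ω` is joined to `x₀` by a rectifiable curve
parametrized by arc length (hence `1`-Lipschitz) staying in `Ω`, along which
`dist(γ t, ∂Ω) ≥ t / c_J`. -/
def IsJohnDomain {X : Type*} [MetricSpace X] (Ω : Set X) : Prop :=
  IsOpen Ω ∧ IsConnected Ω ∧ Bornology.IsBounded Ω ∧
  ∃ x₀ ∈ Ω, ∃ cJ > (0 : ℝ), ∀ x ∈ Ω, ∃ l ≥ (0 : ℝ), ∃ γ : ℝ → X,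
    γ 0 = x ∧ γ l = x₀ ∧ (∀ t ∈ Set.Icc 0 l, γ t ∈ Ω) ∧
    LipschitzOnWith 1 γ (Set.Icc 0 l) ∧
    ∀ t ∈ Set.Icc 0 l, t / cJ ≤ Metric.infDist (γ t) (frontier Ω)

/-- The boundary of a bounded John domain in a complete metric space is porous. -/
theorem john_domain_boundary_porous
    {X : Type*} [MetricSpace X] [CompleteSpace X]
    (Ω : Set X) (hΩ : IsJohnDomain Ω) :
    IsPorousSet (frontier Ω) := by
  obtain ⟨hopen, hconn, hbdd, x₀, hx₀, cJ, hcJ, hJohn⟩ := hΩ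
  by_cases hF : frontier Ω = ∅
  · exact ⟨1, ⟨one_pos, le_refl 1⟩, fun x r hr hr1 =>
      ⟨x, Metric.mem_ball_self hr, by simp [hF]⟩⟩
  · have hFne : (frontier Ω).Nonempty := Set.nonempty_iff_ne_empty.mpr hF
    have hx₀F : x₀ ∉ frontier Ω := fun h => h.2 (by rw [hopen.interior_eq]; exact hx₀)
    have hδ : 0 < infDist x₀ (frontier Ω) :=
      (IsClosed.notMem_iff_infDist_pos isClosed_frontier hFne).mp hx₀F
    set δ := infDist x₀ (frontier Ω) with hδdef
    set κ := min (1/2 : ℝ) (min (1/(8*cJ)) δ) with hκdef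
    have hκpos : 0 < κ := lt_min (by norm_num) (lt_min (by positivity) hδ)
    refine ⟨κ, ⟨hκpos, (min_le_left _ _).trans (by norm_num)⟩, ?_⟩
    intro x r hr hr1
    by_cases hx : ∀ z ∈ frontier Ω, r/2 ≤ dist x z
    · refine ⟨x, Metric.mem_ball_self hr, ?_⟩
      ext p
      simp only [Set.mem_inter_iff, Metric.mem_ball, Set.mem_empty_iff_false,
        iff_false, not_and]
      intro hp hpF
      have := hx p hpF
      rw [dist_comm] at this
      have : κ * r ≤ r / 2 := by
        have : κ ≤ 1/2 := min_le_left _ _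
        nlinarith
      linarith
    · push_neg at hx
      obtain ⟨z, hzF, hxz⟩ := hx
      have hzcl : z ∈ closure Ω := hzF.1
      obtain ⟨w, hwΩ, hzw⟩ : ∃ w ∈ Ω, dist z w < r/8 :=
        Metric.mem_closure_iff.mp hzcl _ (by positivity)
      obtain ⟨l, hl, γ, hγ0, hγl, hγΩ, hγlip, hγdist⟩ := hJohn w hwΩ
      set t := min l (r/8) with htdef
      have ht0 : 0 ≤ t := le_min hl (by positivity)
      have ht : t ∈ Set.Icc (0:ℝ) l := ⟨ht0, min_le_left _ _⟩
      have h0mem : (0:ℝ) ∈ Set.Icc (0:ℝ) l := ⟨le_refl 0, hl⟩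
      have hγtw : dist (γ t) w ≤ t := by
        have := hγlip.dist_le_mul t ht 0 h0mem
        simpa [hγ0, Real.dist_eq, abs_of_nonneg ht0] using this
      refine ⟨γ t, ?_, ?_⟩
      · have : dist (γ t) x ≤ dist (γ t) w + dist w z + dist z x :=
          dist_triangle4 _ _ _ _
        rw [Metric.mem_ball]
        have htr : t ≤ r/8 := min_le_right _ _
        rw [dist_comm] at hzw hxz
        linarith
      · have hd : κ * r ≤ infDist (γ t) (frontier Ω) := by
          rcases le_or_gt (r/8) l with h | h
          · have hteq : t = r/8 := min_eq_right h
            have hbd := hγdist t ht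
            have h1 : κ * r ≤ t / cJ := by
              have hκ2 : κ ≤ 1/(8*cJ) := (min_le_right _ _).trans (min_le_left _ _)
              rw [hteq, div_div]
              calc κ * r ≤ (1/(8*cJ)) * r := mul_le_mul_of_nonneg_right hκ2 hr.le
                _ = r / (8*cJ) := by ring
            linarith
          · have hteq : t = l := min_eq_left h.le
            rw [hteq, hγl, ← hδdef]
            have hκ3 : κ ≤ δ := (min_le_right _ _).trans (min_le_right _ _)
            nlinarith
        ext p
        simp only [Set.mem_inter_iff, Metric.mem_ball, Set.mem_empty_iff_false,
          iff_false, not_and]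
        intro hp hpF
        have := Metric.infDist_le_dist_of_mem (x := γ t) hpF
        rw [dist_comm] at hp
        linarith
end
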